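/- With N, q, and the matrices M_U, M_V, M_W as in the context, let u, v, h be nonzero complex numbers with u^N ≠ −1, and define R_U := (1 + q·M_U(u)⁻¹)⁻¹·(1 + q³·M_U(u)⁻¹)⁻¹·M_W(u,v,h), R_V := (1 + q·M_U(u))·(1 + q³·M_U(u))·M_V(v), and R_W := M_U(u)⁻¹. Then (R_U)^N = (h^N / (u^N·v^N·(1 + u^{−N})²))·I, (R_V)^N = (1 + u^N)²·v^N·I, and (R_W)^N = u^{−N}·I, where I is the N×N identity matrix. -/

import Mathlib

open Matrix

/-- The image of the generator `U` of the Chekhov–Fock algebra of the once-punctured torus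
under the standard representation: the diagonal matrix with entries `u·q^{4i}`. -/
noncomputable def MU (N : ℕ) (q u : ℂ) : Matrix (Fin N) (Fin N) ℂ :=
  Matrix.diagonal fun i => u * q ^ (4 * (i : ℕ))

/-- The image of the generator `V`: the cyclic shift matrix with entries `v`. -/
noncomputable def MV (N : ℕ) (v : ℂ) : Matrix (Fin N) (Fin N) ℂ :=
  Matrix.of fun i j => if (j : ℕ) = ((i : ℕ) + 1) % N then v else 0

/-- The image of the generator `W`: `q⁻²·h·(M_U(u)·M_V(v))⁻¹`. -/
noncomputable def MW (N : ℕ) (q u v h : ℂ) : Matrix (Fin N) (Fin N) ℂ :=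
  ((q ^ 2)⁻¹ * h) • (MU N q u * MV N v)⁻¹

section Aux

open Finset Polynomial
open Fin.NatCast

/-- Product of `1 + ζ^i x` over all `i` is `1 + x^N`, for `ζ` a primitive `N`-th root
of unity and `N` odd. -/
lemma prod_one_add_pow_mul {N : ℕ} (hN : Odd N) (hNpos : 0 < N) {ζ : ℂ}
    (hζ : IsPrimitiveRoot ζ N) (x : ℂ) :
    ∏ i ∈ Finset.range N, (1 + ζ ^ i * x) = 1 + x ^ N := by
  have h := X_pow_sub_C_eq_prod hζ (α := x) hNpos rfl
  apply_fun Polynomial.eval (-1 : ℂ) at h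
  simp only [eval_sub, eval_pow, eval_X, eval_C, eval_prod] at h
  have h2 : ∀ i : ℕ, (1 : ℂ) + ζ ^ i * x = (-1) * ((-1) - ζ ^ i * x) := by intro i; ring
  calc ∏ i ∈ Finset.range N, (1 + ζ ^ i * x)
      = ∏ i ∈ Finset.range N, ((-1) * ((-1) - ζ ^ i * x)) := by simp_rw [h2]
    _ = (-1 : ℂ) ^ N * ∏ i ∈ Finset.range N, ((-1) - ζ ^ i * x) := by
        rw [Finset.prod_mul_distrib, Finset.prod_const, Finset.card_range]
    _ = (-1 : ℂ) ^ N * ((-1) ^ N - x ^ N) := by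
        rw [← h]
    _ = 1 + x ^ N := by rw [hN.neg_one_pow]; ring

lemma MV_apply {N : ℕ} [NeZero N] (v : ℂ) (i j : Fin N) :
    MV N v i j = if j = i + 1 then v else 0 := by
  have hc : (j = i + 1) ↔ ((j : ℕ) = ((i : ℕ) + 1) % N) := by
    rw [Fin.ext_iff, Fin.val_add, Fin.val_one']
    conv_rhs => rw [Nat.add_mod, Nat.mod_eq_of_lt i.isLt]
  simp only [MV, of_apply, hc]

lemma diag_shift_apply {N : ℕ} [NeZero N] (d : Fin N → ℂ) (v : ℂ) (i j : Fin N) :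
    (diagonal d * MV N v) i j = if j = i + 1 then d i * v else 0 := by
  rw [diagonal_mul, MV_apply]
  split_ifs <;> ring

lemma diag_shift_pow {N : ℕ} [NeZero N] (d : Fin N → ℂ) (v : ℂ) (k : ℕ) :
    (diagonal d * MV N v) ^ k =
      Matrix.of fun i j => if j = i + (k : Fin N)
        then (∏ t ∈ Finset.range k, d (i + (t : Fin N))) * v ^ k else 0 := by
  induction k with
  | zero =>
    ext i j
    simp [Matrix.one_apply, eq_comm]
  | succ k ih =>
    rw [pow_succ, ih]
    ext i j
    rw [Matrix.mul_apply]
    simp only [of_apply, diag_shift_apply, ite_mul, zero_mul]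
    rw [Finset.sum_ite_eq' Finset.univ (i + (k : Fin N))]
    simp only [Finset.mem_univ, if_true]
    have h1 : i + ((k + 1 : ℕ) : Fin N) = i + (k : Fin N) + 1 := by
      push_cast; rw [add_assoc]
    rw [h1, Finset.prod_range_succ]
    split_ifs with hj
    · ring
    · ring

/-- The `N`-th power of `diagonal d * MV N v` is the scalar `(∏ d) * v^N`. -/
lemma diag_shift_pow_self {N : ℕ} [NeZero N] (d : Fin N → ℂ) (v : ℂ) :
    (diagonal d * MV N v) ^ N = ((∏ i, d i) * v ^ N) • (1 : Matrix (Fin N) (Fin N) ℂ) := by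
  rw [diag_shift_pow]
  ext i j
  have hN0 : ((N : ℕ) : Fin N) = 0 := Fin.natCast_self N
  have hprod : (∏ t ∈ Finset.range N, d (i + (t : Fin N))) = ∏ t, d t := by
    rw [← Fin.prod_univ_eq_prod_range (fun t => d (i + ((t : ℕ) : Fin N))) N]
    simp only [Fin.cast_val_eq_self]
    exact Fintype.prod_equiv (Equiv.addLeft i) _ _ (fun t => rfl)
  rw [of_apply, hN0, hprod]
  simp only [add_zero, Matrix.smul_apply, Matrix.one_apply, smul_eq_mul]
  split_ifs with h1 h2 h3
  · rw [mul_one]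
  · exact absurd h1.symm h2
  · exact absurd h3.symm h1
  · rw [mul_zero]

lemma one_add_smul_diag {N : ℕ} (c : ℂ) (a : Fin N → ℂ) :
    (1 : Matrix (Fin N) (Fin N) ℂ) + c • diagonal a = diagonal (fun i => 1 + c * a i) := by
  rw [← Matrix.diagonal_one, ← Matrix.diagonal_smul, ← Matrix.diagonal_add]
  rfl

lemma shift_mul_diag {N : ℕ} [NeZero N] (v : ℂ) (g : Fin N → ℂ) :
    MV N v * diagonal g = diagonal (fun i => g (i + 1)) * MV N v := by
  ext i j
  rw [Matrix.mul_diagonal, diagonal_mul, MV_apply]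
  split_ifs with h
  · rw [h]; ring
  · ring

end Aux

/-- The `N`-th powers of the images `R_U, R_V, R_W` of `U, V, W` under `χ_{u,v,h} ∘ ℛ`
are the scalar matrices `h^N/(u^N v^N (1+u^{−N})²)`, `(1+u^N)² v^N`, and `u^{−N}`. -/
theorem stmt7 (N : ℕ) (hN : Odd N) (hNpos : 0 < N) (q : ℂ) (hq : IsPrimitiveRoot q N)
    (u v h : ℂ) (hu : u ≠ 0) (hv : v ≠ 0) (hh : h ≠ 0) (hun : u ^ N ≠ -1)
    (RU RV RW : Matrix (Fin N) (Fin N) ℂ)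
    (hRU : RU = (1 + q • (MU N q u)⁻¹)⁻¹ * (1 + q ^ 3 • (MU N q u)⁻¹)⁻¹ * MW N q u v h)
    (hRV : RV = (1 + q • MU N q u) * (1 + q ^ 3 • MU N q u) * MV N v)
    (hRW : RW = (MU N q u)⁻¹) :
    RU ^ N = (h ^ N / (u ^ N * v ^ N * (1 + (u ^ N)⁻¹) ^ 2)) • (1 : Matrix (Fin N) (Fin N) ℂ) ∧
    RV ^ N = ((1 + u ^ N) ^ 2 * v ^ N) • (1 : Matrix (Fin N) (Fin N) ℂ) ∧
    RW ^ N = (u ^ N)⁻¹ • (1 : Matrix (Fin N) (Fin N) ℂ) := by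
  haveI : NeZero N := ⟨hNpos.ne'⟩
  have hqN : q ^ N = 1 := hq.pow_eq_one
  have hq0 : q ≠ 0 := by
    intro h0
    rw [h0, zero_pow hNpos.ne'] at hqN
    exact zero_ne_one hqN
  have hcop : Nat.Coprime 4 N := by
    have h2 : Nat.Coprime 2 N := Nat.coprime_two_left.mpr hN
    have := h2.pow_left 2
    norm_num at this
    exact this
  have hq4 : IsPrimitiveRoot (q ^ 4) N := hq.pow_of_coprime 4 hcop
  have hq4i : IsPrimitiveRoot ((q ^ 4)⁻¹) N := hq4.inv
  -- `MU` facts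
  set a : Fin N → ℂ := fun i => u * q ^ (4 * (i : ℕ)) with ha
  have hMU : MU N q u = diagonal a := rfl
  have ha0 : ∀ i, a i ≠ 0 := fun i => mul_ne_zero hu (pow_ne_zero _ hq0)
  have haN : ∀ i : Fin N, a i ^ N = u ^ N := by
    intro i
    rw [ha]
    simp only
    rw [mul_pow, ← pow_mul]
    have : 4 * (i : ℕ) * N = N * (4 * (i : ℕ)) := by ring
    rw [this, pow_mul, hqN, one_pow, mul_one]
  have hMUinv : (MU N q u)⁻¹ = diagonal (fun i => (a i)⁻¹) := by
    rw [hMU]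
    apply Matrix.inv_eq_right_inv
    rw [Matrix.diagonal_mul_diagonal]
    ext i j
    by_cases hij : i = j <;>
      simp [hij, Matrix.diagonal_apply, Matrix.one_apply, mul_inv_cancel₀ (ha0 j)]
  -- the products over all i
  have hprod_a : ∏ i : Fin N, a i = u ^ N := by
    rw [ha]
    rw [Finset.prod_mul_distrib, Finset.prod_const, Finset.card_univ, Fintype.card_fin]
    have hsum : ∏ i : Fin N, q ^ (4 * (i : ℕ)) = q ^ (∑ i : Fin N, 4 * (i : ℕ)) :=
      Finset.prod_pow_eq_pow_sum _ _ _
    have hsv : (∑ i : Fin N, 4 * (i : ℕ)) = 2 * ((∑ i ∈ Finset.range N, i) * 2) := by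
      rw [Fin.sum_univ_eq_sum_range (fun i => 4 * i) N, ← Finset.mul_sum]
      ring
    rw [hsum, hsv, Finset.sum_range_id_mul_two]
    have : 2 * (N * (N - 1)) = N * (2 * (N - 1)) := by ring
    rw [this, pow_mul, hqN, one_pow, mul_one]
  have hprod_up : ∀ c : ℂ, ∏ i : Fin N, (1 + c * a i) = 1 + (c * u) ^ N := by
    intro c
    have : ∀ i : Fin N, 1 + c * a i = 1 + (q ^ 4) ^ (i : ℕ) * (c * u) := by
      intro i; rw [ha]; simp only; rw [← pow_mul]; ring_nf
    simp_rw [this]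
    rw [Fin.prod_univ_eq_prod_range (fun i => 1 + (q ^ 4) ^ i * (c * u)) N]
    exact prod_one_add_pow_mul hN hNpos hq4 (c * u)
  have hprod_dn : ∀ c : ℂ, ∏ i : Fin N, (1 + c * (a i)⁻¹) = 1 + (c * u⁻¹) ^ N := by
    intro c
    have : ∀ i : Fin N, 1 + c * (a i)⁻¹ = 1 + ((q ^ 4)⁻¹) ^ (i : ℕ) * (c * u⁻¹) := by
      intro i
      rw [ha]
      simp only [pow_mul]
      rw [mul_inv, inv_pow]
      ring
    simp_rw [this]
    rw [Fin.prod_univ_eq_prod_range (fun i => 1 + ((q ^ 4)⁻¹) ^ i * (c * u⁻¹)) N]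
    exact prod_one_add_pow_mul hN hNpos hq4i (c * u⁻¹)
  refine ⟨?_, ?_, ?_⟩
  · -- RU
    set g₁ : Fin N → ℂ := fun i => 1 + q * (a i)⁻¹ with hg₁
    set g₂ : Fin N → ℂ := fun i => 1 + q ^ 3 * (a i)⁻¹ with hg₂
    have hG₁ : (1 : Matrix (Fin N) (Fin N) ℂ) + q • (MU N q u)⁻¹ = diagonal g₁ := by
      rw [hMUinv, one_add_smul_diag]
    have hG₂ : (1 : Matrix (Fin N) (Fin N) ℂ) + q ^ 3 • (MU N q u)⁻¹ = diagonal g₂ := by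
      rw [hMUinv, one_add_smul_diag]
    set X : Matrix (Fin N) (Fin N) ℂ := MU N q u * MV N v * diagonal g₂ * diagonal g₁ with hX
    have hRUX : RU = ((q ^ 2)⁻¹ * h) • X⁻¹ := by
      rw [hRU, hG₁, hG₂, MW, hX]
      simp only [Matrix.mul_inv_rev, Matrix.mul_smul, Matrix.mul_assoc]
    -- X as diagonal * shift
    set dd : Fin N → ℂ := fun i => a i * g₂ (i + 1) * g₁ (i + 1) with hdd
    have hXd : X = diagonal dd * MV N v := by
      rw [hX, hMU, Matrix.mul_assoc (diagonal a), shift_mul_diag,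
        ← Matrix.mul_assoc (diagonal a), Matrix.diagonal_mul_diagonal, Matrix.mul_assoc,
        shift_mul_diag, ← Matrix.mul_assoc, Matrix.diagonal_mul_diagonal]
    set β : ℂ := 1 + (u ^ N)⁻¹ with hβ
    set α : ℂ := u ^ N * β ^ 2 * v ^ N with hα
    have hprod_dd : ∏ i, dd i = u ^ N * β ^ 2 := by
      rw [hdd]
      simp only
      rw [Finset.prod_mul_distrib, Finset.prod_mul_distrib, hprod_a]
      have e1 : ∏ i : Fin N, g₂ (i + 1) = ∏ i : Fin N, g₂ i :=
        Fintype.prod_equiv (Equiv.addRight (1 : Fin N)) _ _ (fun t => rfl)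
      have e2 : ∏ i : Fin N, g₁ (i + 1) = ∏ i : Fin N, g₁ i :=
        Fintype.prod_equiv (Equiv.addRight (1 : Fin N)) _ _ (fun t => rfl)
      have k1 : (q * u⁻¹) ^ N = (u ^ N)⁻¹ := by
        rw [mul_pow, hqN, one_mul, inv_pow]
      have k2 : (q ^ 3 * u⁻¹) ^ N = (u ^ N)⁻¹ := by
        rw [mul_pow, ← pow_mul, mul_comm 3 N, pow_mul, hqN, one_pow, one_mul, inv_pow]
      rw [e1, e2, hg₁, hg₂, hprod_dn q, hprod_dn (q ^ 3), k1, k2, ← hβ]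
      ring
    have hXN : X ^ N = α • (1 : Matrix (Fin N) (Fin N) ℂ) := by
      rw [hXd, diag_shift_pow_self, hprod_dd, hα]
    have hβ0 : β ≠ 0 := by
      rw [hβ]
      intro h0
      apply hun
      have : (u ^ N)⁻¹ = -1 := by linear_combination h0
      rw [← inv_inv (u ^ N), this]
      norm_num
    have hα0 : α ≠ 0 := by
      rw [hα]
      exact mul_ne_zero (mul_ne_zero (pow_ne_zero _ hu) (pow_ne_zero _ hβ0)) (pow_ne_zero _ hv)
    have hXinv : X⁻¹ = α⁻¹ • X ^ (N - 1) := by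
      apply Matrix.inv_eq_right_inv
      rw [Matrix.mul_smul, ← pow_succ']
      have : N - 1 + 1 = N := Nat.succ_pred_eq_of_pos hNpos
      rw [this, hXN, smul_smul, inv_mul_cancel₀ hα0, one_smul]
    have hXinvN : (X⁻¹) ^ N = α⁻¹ • (1 : Matrix (Fin N) (Fin N) ℂ) := by
      rw [hXinv, smul_pow, ← pow_mul]
      have : (N - 1) * N = N * (N - 1) := by ring
      rw [this, pow_mul, hXN, smul_pow, one_pow, smul_smul]
      congr 1
      rw [inv_pow, inv_eq_one_div, inv_eq_one_div α, div_mul_eq_mul_div, one_mul,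
        div_eq_div_iff (pow_ne_zero N hα0) hα0, one_mul, ← pow_succ]
      congr 1
      omega
    rw [hRUX, smul_pow, hXinvN, smul_smul]
    congr 1
    have hq2N : (q ^ 2) ^ N = 1 := by
      rw [← pow_mul]
      have : 2 * N = N * 2 := by ring
      rw [this, pow_mul, hqN, one_pow]
    rw [mul_pow, inv_pow, hq2N, inv_one, one_mul, hα]
    rw [div_eq_mul_inv]
    congr 2
    ring
  · -- RV
    have hD : (1 + q • MU N q u) * (1 + q ^ 3 • MU N q u) =
        diagonal (fun i => (1 + q * a i) * (1 + q ^ 3 * a i)) := by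
      rw [hMU, one_add_smul_diag, one_add_smul_diag, Matrix.diagonal_mul_diagonal]
    rw [hRV, hD, diag_shift_pow_self]
    congr 1
    have k1 : (q * u) ^ N = u ^ N := by rw [mul_pow, hqN, one_mul]
    have k2 : (q ^ 3 * u) ^ N = u ^ N := by
      rw [mul_pow, ← pow_mul, mul_comm 3 N, pow_mul, hqN, one_pow, one_mul]
    rw [Finset.prod_mul_distrib, hprod_up q, hprod_up (q ^ 3), k1, k2]
    ring
  · -- RW
    rw [hRW, hMUinv, Matrix.diagonal_pow]
    have : ∀ i : Fin N, ((a i)⁻¹) ^ N = (u ^ N)⁻¹ := by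
      intro i
      rw [inv_pow, haN]
    rw [show ((fun i => (a i)⁻¹) ^ N : Fin N → ℂ) = fun _ => (u ^ N)⁻¹ by
      funext i; exact this i]
    rw [Matrix.smul_one_eq_diagonal]
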